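/- Let k be a field and K = k(t) the rational function field. The valuation subrings O of K with k ⊆ O and O ≠ K are exactly the following: the localizations k[t]_{(p)} of k[t] at the prime ideal generated by a monic irreducible polynomial p ∈ k[t], and the ring k[1/t]_{(1/t)} (the localization of k[1/t] at the prime ideal generated by 1/t). These rings are pairwise distinct, so places of K/k correspond bijectively to monic irreducible polynomials of k[t] together with one extra place at infinity. -/

import Mathlib

/-- The subset of `k(t)` corresponding to the localization `k[t]_(p)` of `k[t]` at the
prime ideal generated by `p`. -/
def finitePlaceRing (k : Type*) [Field k] (p : Polynomial k) : Set (RatFunc k) :=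
  {z : RatFunc k | ∃ a b : Polynomial k, ¬ p ∣ b ∧
    z * algebraMap (Polynomial k) (RatFunc k) b = algebraMap (Polynomial k) (RatFunc k) a}

/-- The subset of `k(t)` corresponding to the localization `k[1/t]_(1/t)` of `k[1/t]` at the
prime ideal generated by `1/t`. -/
def infinitePlaceRing (k : Type*) [Field k] : Set (RatFunc k) :=
  {z : RatFunc k | ∃ a b : Polynomial k, b.coeff 0 ≠ 0 ∧
    z * Polynomial.aeval (RatFunc.X : RatFunc k)⁻¹ b = Polynomial.aeval (RatFunc.X : RatFunc k)⁻¹ a}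

namespace PlacesAux

open Polynomial

variable {k : Type*} [Field k]

lemma algebraMap_eq_aeval (f : k[X]) :
    algebraMap k[X] (RatFunc k) f = aeval (RatFunc.X : RatFunc k) f := by
  have h := Polynomial.aeval_algHom_apply
    (IsScalarTower.toAlgHom k k[X] (RatFunc k)) Polynomial.X f
  simp only [Polynomial.aeval_X_left_apply, IsScalarTower.coe_toAlgHom',
    RatFunc.algebraMap_X] at h
  exact h.symm

lemma aeval_mem (O : ValuationSubring (RatFunc k))
    (hk : ∀ a : k, algebraMap k (RatFunc k) a ∈ O)
    {x : RatFunc k} (hx : x ∈ O) (f : k[X]) : aeval x f ∈ O := by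
  induction f using Polynomial.induction_on with
  | C a => simpa using hk a
  | add p q hp hq => rw [map_add]; exact add_mem hp hq
  | monomial n a _ =>
      rw [map_mul, map_pow, aeval_C, aeval_X]
      exact mul_mem (hk a) (pow_mem hx _)

lemma algebraMap_mem (O : ValuationSubring (RatFunc k))
    (hk : ∀ a : k, algebraMap k (RatFunc k) a ∈ O)
    (hX : (RatFunc.X : RatFunc k) ∈ O) (f : k[X]) :
    algebraMap k[X] (RatFunc k) f ∈ O := by
  rw [algebraMap_eq_aeval]; exact aeval_mem O hk hX f

lemma reflect_natDegree_le {f : k[X]} {N : ℕ} (hf : f.natDegree ≤ N) :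
    (reflect N f).natDegree ≤ N := by
  rw [Polynomial.natDegree_le_iff_coeff_eq_zero]
  intro i hi
  rw [coeff_reflect, revAt_eq_self_of_lt hi]
  exact coeff_eq_zero_of_natDegree_lt (lt_of_le_of_lt hf hi)

lemma reflect_reflect (N : ℕ) (f : k[X]) : reflect N (reflect N f) = f := by
  ext i; rw [coeff_reflect, coeff_reflect, revAt_invol]

lemma aeval_reflect_mul_pow (N : ℕ) (f : k[X]) (hf : f.natDegree ≤ N) :
    aeval (RatFunc.X : RatFunc k)⁻¹ (reflect N f) * RatFunc.X ^ N
      = algebraMap k[X] (RatFunc k) f := by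
  haveI : Invertible (RatFunc.X : RatFunc k) := invertibleOfNonzero RatFunc.X_ne_zero
  have h := Polynomial.eval₂_reflect_mul_pow (algebraMap k (RatFunc k)) RatFunc.X N f hf
  rw [invOf_eq_inv] at h
  rw [aeval_def, h, ← aeval_def, ← algebraMap_eq_aeval]

lemma aeval_mul_pow (N : ℕ) (f : k[X]) (hf : f.natDegree ≤ N) :
    aeval (RatFunc.X : RatFunc k)⁻¹ f * RatFunc.X ^ N
      = algebraMap k[X] (RatFunc k) (reflect N f) := by
  have h := aeval_reflect_mul_pow N (reflect N f) (reflect_natDegree_le hf)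
  rwa [reflect_reflect] at h

lemma mul_denom (z : RatFunc k) :
    z * algebraMap k[X] (RatFunc k) z.denom = algebraMap k[X] (RatFunc k) z.num := by
  have hd0 : algebraMap k[X] (RatFunc k) z.denom ≠ 0 :=
    RatFunc.algebraMap_ne_zero z.denom_ne_zero
  exact ((div_eq_iff hd0).mp (RatFunc.num_div_denom z)).symm

lemma natDegree_reflect_eq {b : k[X]} {N : ℕ} (hb : b.natDegree ≤ N) (hb0 : b.coeff 0 ≠ 0) :
    (reflect N b).natDegree = N := by
  refine le_antisymm (reflect_natDegree_le hb) ?_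
  apply Polynomial.le_natDegree_of_ne_zero
  rw [coeff_reflect, revAt_le (le_refl N), Nat.sub_self]
  exact hb0

lemma natDegree_num_le_of_mem_inf {z : RatFunc k} (hz : z ∈ infinitePlaceRing k) :
    z.num.natDegree ≤ z.denom.natDegree := by
  obtain ⟨a, b, hb0, he⟩ := hz
  by_cases h0 : z = 0
  · simp [h0, RatFunc.num_zero, RatFunc.denom_zero]
  set N := max a.natDegree b.natDegree with hN
  have ha : a.natDegree ≤ N := le_max_left _ _
  have hb : b.natDegree ≤ N := le_max_right _ _
  have he2 : z * algebraMap k[X] (RatFunc k) (reflect N b)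
      = algebraMap k[X] (RatFunc k) (reflect N a) := by
    rw [← aeval_mul_pow N b hb, ← aeval_mul_pow N a ha, ← mul_assoc, he]
  have key : z.num * reflect N b = z.denom * reflect N a := by
    apply RatFunc.algebraMap_injective k
    have h3 := mul_denom z
    rw [map_mul, map_mul]
    linear_combination (-(algebraMap k[X] (RatFunc k) (reflect N b))) * h3
      + (algebraMap k[X] (RatFunc k) z.denom) * he2
  have hbz : b ≠ 0 := fun h => hb0 (by simp [h])
  have hrb0 : reflect N b ≠ 0 := fun h => hbz (reflect_eq_zero_iff.mp h)
  have hnum0 : z.num ≠ 0 := fun h => h0 (RatFunc.num_eq_zero_iff.mp h)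
  have hra0 : reflect N a ≠ 0 := by
    intro h
    rw [h, mul_zero] at key
    exact mul_ne_zero hnum0 hrb0 key
  have hdeg := congrArg Polynomial.natDegree key
  rw [Polynomial.natDegree_mul hnum0 hrb0, Polynomial.natDegree_mul z.denom_ne_zero hra0]
    at hdeg
  have h1 : (reflect N b).natDegree = N := natDegree_reflect_eq hb hb0
  have h2 : (reflect N a).natDegree ≤ N := reflect_natDegree_le ha
  omega

lemma mem_inf_of_deg {z : RatFunc k} (h : z.num.natDegree ≤ z.denom.natDegree) :
    z ∈ infinitePlaceRing k := by
  set N := z.denom.natDegree with hN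
  refine ⟨reflect N z.num, reflect N z.denom, ?_, ?_⟩
  · rw [coeff_reflect, revAt_zero]
    exact Polynomial.leadingCoeff_ne_zero.mpr z.denom_ne_zero
  · apply mul_right_cancel₀ (pow_ne_zero N RatFunc.X_ne_zero)
    rw [mul_assoc, aeval_reflect_mul_pow N z.denom le_rfl, aeval_reflect_mul_pow N z.num h]
    exact mul_denom z

lemma inv_mem_of_not_dvd (O : ValuationSubring (RatFunc k))
    (hk : ∀ a : k, algebraMap k (RatFunc k) a ∈ O)
    (hX : (RatFunc.X : RatFunc k) ∈ O)
    {p : k[X]} (hp : Irreducible p)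
    (hpinv : (algebraMap k[X] (RatFunc k) p)⁻¹ ∉ O)
    {b : k[X]} (hb : ¬ p ∣ b) : (algebraMap k[X] (RatFunc k) b)⁻¹ ∈ O := by
  have hb0 : b ≠ 0 := fun h => hb (h ▸ dvd_zero p)
  obtain ⟨u, v, huv⟩ := hp.coprime_iff_not_dvd.mpr hb
  set P := algebraMap k[X] (RatFunc k) p with hP
  set B := algebraMap k[X] (RatFunc k) b with hB
  have hB0 : B ≠ 0 := RatFunc.algebraMap_ne_zero hb0
  have hP0 : P ≠ 0 := RatFunc.algebraMap_ne_zero hp.ne_zero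
  have h1 : algebraMap k[X] (RatFunc k) u * P + algebraMap k[X] (RatFunc k) v * B = 1 := by
    rw [← map_mul, ← map_mul, ← map_add, huv, map_one]
  rcases O.mem_or_inv_mem (P * B⁻¹) with h | h
  · have h2 : algebraMap k[X] (RatFunc k) u * (P * B⁻¹)
        + algebraMap k[X] (RatFunc k) v = B⁻¹ := by
      field_simp
      linear_combination h1
    rw [← h2]
    exact add_mem (mul_mem (algebraMap_mem O hk hX u) h) (algebraMap_mem O hk hX v)
  · exfalso
    apply hpinv
    rw [mul_inv, inv_inv, mul_comm] at h
    have h2 : algebraMap k[X] (RatFunc k) u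
        + algebraMap k[X] (RatFunc k) v * (B * P⁻¹) = P⁻¹ := by
      field_simp
      linear_combination h1
    rw [← h2]
    exact add_mem (algebraMap_mem O hk hX u) (mul_mem (algebraMap_mem O hk hX v) h)

lemma exists_irred_inv_not_mem (O : ValuationSubring (RatFunc k))
    (hk : ∀ a : k, algebraMap k (RatFunc k) a ∈ O) :
    ∀ n (f : k[X]), f.natDegree ≤ n → f ≠ 0 →
      (algebraMap k[X] (RatFunc k) f)⁻¹ ∉ O →
      ∃ p : k[X], p.Monic ∧ Irreducible p ∧ (algebraMap k[X] (RatFunc k) p)⁻¹ ∉ O := by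
  intro n
  induction n with
  | zero =>
      intro f hdeg hf0 hfinv
      exfalso
      apply hfinv
      have hc := Polynomial.eq_C_of_natDegree_eq_zero (Nat.le_zero.mp hdeg)
      have hc0 : f.coeff 0 ≠ 0 := fun h => hf0 (by rw [hc, h, map_zero])
      rw [hc, RatFunc.algebraMap_C, ← RatFunc.algebraMap_eq_C, ← map_inv₀]
      exact hk _
  | succ n ih =>
      intro f hdeg hf0 hfinv
      by_cases hu : IsUnit f
      · exfalso
        apply hfinv
        obtain ⟨c, hc0, hc⟩ := Polynomial.isUnit_iff.mp hu
        rw [← hc, RatFunc.algebraMap_C, ← RatFunc.algebraMap_eq_C, ← map_inv₀]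
        exact hk _
      · obtain ⟨g, hgm, hgi, e, rfl⟩ := f.exists_monic_irreducible_factor hu
        by_cases hginv : (algebraMap k[X] (RatFunc k) g)⁻¹ ∈ O
        · have he0 : e ≠ 0 := fun h => hf0 (by rw [h, mul_zero])
          have hg0 : g ≠ 0 := hgi.ne_zero
          have heinv : (algebraMap k[X] (RatFunc k) e)⁻¹ ∉ O := by
            intro he
            apply hfinv
            rw [map_mul, mul_inv]
            exact mul_mem hginv he
          have hdeg' : e.natDegree ≤ n := by
            have := Polynomial.natDegree_mul hg0 he0
            have hg1 := hgi.natDegree_pos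
            omega
          exact ih e hdeg' he0 heinv
        · exact ⟨g, hgm, hgi, hginv⟩

lemma inf_subset (O : ValuationSubring (RatFunc k))
    (hk : ∀ a : k, algebraMap k (RatFunc k) a ∈ O)
    (hX : (RatFunc.X : RatFunc k) ∉ O)
    (hXinv : (RatFunc.X : RatFunc k)⁻¹ ∈ O) :
    infinitePlaceRing k ⊆ (O : Set (RatFunc k)) := by
  rintro z ⟨a, b, hb0, he⟩
  have hbO : aeval (RatFunc.X : RatFunc k)⁻¹ b ∈ O := aeval_mem O hk hXinv b
  have hdO : aeval (RatFunc.X : RatFunc k)⁻¹ (divX b) ∈ O := aeval_mem O hk hXinv (divX b)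
  have hsplit : aeval (RatFunc.X : RatFunc k)⁻¹ b
      = (RatFunc.X : RatFunc k)⁻¹ * aeval (RatFunc.X : RatFunc k)⁻¹ (divX b)
        + algebraMap k (RatFunc k) (b.coeff 0) := by
    conv_lhs => rw [← Polynomial.X_mul_divX_add b]
    rw [map_add, map_mul, aeval_X, aeval_C]
  -- the element `aeval X⁻¹ b` is a unit of O
  have hcunit : IsUnit (⟨algebraMap k (RatFunc k) (b.coeff 0), hk _⟩ : O) := by
    refine IsUnit.of_mul_eq_one ⟨algebraMap k (RatFunc k) (b.coeff 0)⁻¹, hk _⟩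
      (Subtype.ext ?_)
    show algebraMap k (RatFunc k) (b.coeff 0) * algebraMap k (RatFunc k) (b.coeff 0)⁻¹ = 1
    rw [← map_mul, mul_inv_cancel₀ hb0, map_one]
  have hw : IsUnit (⟨aeval (RatFunc.X : RatFunc k)⁻¹ b, hbO⟩ : O) := by
    by_contra hnu
    have hmem : (⟨aeval (RatFunc.X : RatFunc k)⁻¹ b, hbO⟩ : O)
        ∈ IsLocalRing.maximalIdeal O := by
      rw [IsLocalRing.mem_maximalIdeal, mem_nonunits_iff]; exact hnu
    have hXm : (⟨(RatFunc.X : RatFunc k)⁻¹, hXinv⟩ : O) ∈ IsLocalRing.maximalIdeal O := by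
      rw [IsLocalRing.mem_maximalIdeal, mem_nonunits_iff]
      intro hun
      obtain ⟨y, hy⟩ := hun.exists_right_inv
      apply hX
      have hyK : ((RatFunc.X : RatFunc k)⁻¹) * (y : RatFunc k) = 1 :=
        Subtype.ext_iff.mp hy
      have hyX : (y : RatFunc k) = RatFunc.X :=
        ((inv_mul_eq_one₀ RatFunc.X_ne_zero).mp hyK).symm
      exact hyX ▸ y.2
    have hcmem : (⟨algebraMap k (RatFunc k) (b.coeff 0), hk _⟩ : O)
        ∈ IsLocalRing.maximalIdeal O := by
      have heq : (⟨algebraMap k (RatFunc k) (b.coeff 0), hk _⟩ : O)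
          = ⟨aeval (RatFunc.X : RatFunc k)⁻¹ b, hbO⟩
            - ⟨(RatFunc.X : RatFunc k)⁻¹, hXinv⟩
              * ⟨aeval (RatFunc.X : RatFunc k)⁻¹ (divX b), hdO⟩ := by
        refine Subtype.ext ?_
        show algebraMap k (RatFunc k) (b.coeff 0)
          = aeval (RatFunc.X : RatFunc k)⁻¹ b
            - (RatFunc.X : RatFunc k)⁻¹ * aeval (RatFunc.X : RatFunc k)⁻¹ (divX b)
        rw [hsplit]; ring
      rw [heq]
      exact Ideal.sub_mem _ hmem (Ideal.mul_mem_right _ _ hXm)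
    rw [IsLocalRing.mem_maximalIdeal, mem_nonunits_iff] at hcmem
    exact hcmem hcunit
  obtain ⟨y, hy⟩ := hw.exists_right_inv
  have hyK : aeval (RatFunc.X : RatFunc k)⁻¹ b * (y : RatFunc k) = 1 :=
    Subtype.ext_iff.mp hy
  have hz : z = aeval (RatFunc.X : RatFunc k)⁻¹ a * (y : RatFunc k) := by
    calc z = z * (aeval (RatFunc.X : RatFunc k)⁻¹ b * (y : RatFunc k)) := by
            rw [hyK, mul_one]
      _ = (z * aeval (RatFunc.X : RatFunc k)⁻¹ b) * (y : RatFunc k) := by ring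
      _ = aeval (RatFunc.X : RatFunc k)⁻¹ a * (y : RatFunc k) := by rw [he]
  rw [hz]
  exact mul_mem (aeval_mem O hk hXinv a) y.2

end PlacesAux

open Polynomial PlacesAux in
/-- The valuation subrings of `K = k(t)` containing `k` and different from `K` are exactly
the localizations `k[t]_(p)` for monic irreducible `p` together with `k[1/t]_(1/t)`; these
rings are pairwise distinct. -/
theorem stmt_1 (k : Type*) [Field k] :
    (∀ O : ValuationSubring (RatFunc k),
      ((∀ a : k, algebraMap k (RatFunc k) a ∈ O) ∧ O ≠ ⊤) ↔
        ((∃ p : Polynomial k, p.Monic ∧ Irreducible p ∧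
            (O : Set (RatFunc k)) = finitePlaceRing k p) ∨
          (O : Set (RatFunc k)) = infinitePlaceRing k)) ∧
    (∀ p q : Polynomial k, p.Monic → Irreducible p → q.Monic → Irreducible q →
      finitePlaceRing k p = finitePlaceRing k q → p = q) ∧
    (∀ p : Polynomial k, p.Monic → Irreducible p →
      finitePlaceRing k p ≠ infinitePlaceRing k) := by
  have hXnotinf : (RatFunc.X : RatFunc k) ∉ infinitePlaceRing k := by
    intro h
    have := natDegree_num_le_of_mem_inf h
    rw [RatFunc.num_X, RatFunc.denom_X, Polynomial.natDegree_X, Polynomial.natDegree_one] at this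
    omega
  have hnotdvd : ∀ p : Polynomial k, Irreducible p → ¬ p ∣ 1 :=
    fun p hp h => hp.not_isUnit (isUnit_of_dvd_one h)
  have hinvnotmem : ∀ p : Polynomial k, Irreducible p →
      (algebraMap (Polynomial k) (RatFunc k) p)⁻¹ ∉ finitePlaceRing k p := by
    intro p hp ⟨a, b, hb, he⟩
    apply hb
    have hP0 : algebraMap (Polynomial k) (RatFunc k) p ≠ 0 :=
      RatFunc.algebraMap_ne_zero hp.ne_zero
    have : algebraMap (Polynomial k) (RatFunc k) b
        = algebraMap (Polynomial k) (RatFunc k) (a * p) := by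
      rw [map_mul]
      calc algebraMap (Polynomial k) (RatFunc k) b
          = algebraMap (Polynomial k) (RatFunc k) p
            * ((algebraMap (Polynomial k) (RatFunc k) p)⁻¹
              * algebraMap (Polynomial k) (RatFunc k) b) := by
            rw [← mul_assoc, mul_inv_cancel₀ hP0, one_mul]
        _ = algebraMap (Polynomial k) (RatFunc k) p * algebraMap (Polynomial k) (RatFunc k) a := by
            rw [he]
        _ = algebraMap (Polynomial k) (RatFunc k) a * algebraMap (Polynomial k) (RatFunc k) p :=
            mul_comm _ _
    have hb' : b = a * p := RatFunc.algebraMap_injective k this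
    exact ⟨a, by rw [hb', mul_comm]⟩
  refine ⟨?_, ?_, ?_⟩
  · intro O
    constructor
    · rintro ⟨hk, hne⟩
      by_cases hX : (RatFunc.X : RatFunc k) ∈ O
      · -- finite place case
        left
        have hexists : ∃ f : Polynomial k, f ≠ 0 ∧
            (algebraMap (Polynomial k) (RatFunc k) f)⁻¹ ∉ O := by
          by_contra hcon
          push_neg at hcon
          apply hne
          ext z
          simp only [ValuationSubring.mem_top, iff_true]
          have hd := hcon z.denom z.denom_ne_zero
          have hD0 : algebraMap (Polynomial k) (RatFunc k) z.denom ≠ 0 :=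
            RatFunc.algebraMap_ne_zero z.denom_ne_zero
          have hz : z = algebraMap (Polynomial k) (RatFunc k) z.num
              * (algebraMap (Polynomial k) (RatFunc k) z.denom)⁻¹ := by
            rw [← mul_denom z, mul_assoc, mul_inv_cancel₀ hD0, mul_one]
          rw [hz]
          exact mul_mem (algebraMap_mem O hk hX z.num) hd
        obtain ⟨f, hf0, hfinv⟩ := hexists
        obtain ⟨p, hpm, hpi, hpinv⟩ :=
          exists_irred_inv_not_mem O hk f.natDegree f le_rfl hf0 hfinv
        refine ⟨p, hpm, hpi, ?_⟩
        ext z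
        constructor
        · intro hz
          refine ⟨z.num, z.denom, ?_, mul_denom z⟩
          intro hdvd
          obtain ⟨c, hc⟩ := hdvd
          have hz0 : z ≠ 0 := by
            rintro rfl
            rw [RatFunc.denom_zero] at hc
            exact hpi.not_isUnit (IsUnit.of_mul_eq_one _ hc.symm)
          have hnum : ¬ p ∣ z.num := by
            intro h
            obtain ⟨u, v, huv⟩ := RatFunc.isCoprime_num_denom z
            apply hpi.not_isUnit
            apply isUnit_of_dvd_one
            rw [← huv]
            exact dvd_add (Dvd.dvd.mul_left h u) (Dvd.dvd.mul_left (hc ▸ dvd_mul_right p c) v)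
          have hninv := inv_mem_of_not_dvd O hk hX hpi hpinv hnum
          exfalso
          apply hpinv
          have hn0 : z.num ≠ 0 := fun h => hz0 (RatFunc.num_eq_zero_iff.mp h)
          have hN0 : algebraMap (Polynomial k) (RatFunc k) z.num ≠ 0 :=
            RatFunc.algebraMap_ne_zero hn0
          have hP0 : algebraMap (Polynomial k) (RatFunc k) p ≠ 0 :=
            RatFunc.algebraMap_ne_zero hpi.ne_zero
          have hzd := mul_denom z
          rw [hc, map_mul] at hzd
          have hkey : (algebraMap (Polynomial k) (RatFunc k) p)⁻¹
              = z * algebraMap (Polynomial k) (RatFunc k) c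
                * (algebraMap (Polynomial k) (RatFunc k) z.num)⁻¹ := by
            apply inv_eq_of_mul_eq_one_right
            calc algebraMap (Polynomial k) (RatFunc k) p
                  * (z * algebraMap (Polynomial k) (RatFunc k) c
                    * (algebraMap (Polynomial k) (RatFunc k) z.num)⁻¹)
                = (z * (algebraMap (Polynomial k) (RatFunc k) p
                    * algebraMap (Polynomial k) (RatFunc k) c))
                  * (algebraMap (Polynomial k) (RatFunc k) z.num)⁻¹ := by ring
              _ = algebraMap (Polynomial k) (RatFunc k) z.num
                  * (algebraMap (Polynomial k) (RatFunc k) z.num)⁻¹ := by rw [hzd]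
              _ = 1 := mul_inv_cancel₀ hN0
          rw [hkey]
          exact mul_mem (mul_mem hz (algebraMap_mem O hk hX c)) hninv
        · rintro ⟨a, b, hb, he⟩
          have hbinv := inv_mem_of_not_dvd O hk hX hpi hpinv hb
          have hb0 : algebraMap (Polynomial k) (RatFunc k) b ≠ 0 :=
            RatFunc.algebraMap_ne_zero (fun h => hb (h ▸ dvd_zero p))
          have hz : z = algebraMap (Polynomial k) (RatFunc k) a
              * (algebraMap (Polynomial k) (RatFunc k) b)⁻¹ := by
            rw [← he, mul_assoc, mul_inv_cancel₀ hb0, mul_one]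
          rw [hz]
          exact mul_mem (algebraMap_mem O hk hX a) hbinv
      · -- infinite place case
        right
        have hXinv : (RatFunc.X : RatFunc k)⁻¹ ∈ O := (O.mem_or_inv_mem _).resolve_left hX
        have hsub := inf_subset O hk hX hXinv
        ext z
        constructor
        · intro hz
          by_contra hzi
          have hz0 : z ≠ 0 := by
            rintro rfl
            exact hzi ⟨0, 1, by simp, by simp⟩
          have hdeg : z.denom.natDegree < z.num.natDegree := by
            by_contra h
            push_neg at h
            exact hzi (mem_inf_of_deg h)
          set N := z.num.natDegree with hN
          have hn0 : z.num ≠ 0 := fun h => hz0 (RatFunc.num_eq_zero_iff.mp h)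
          have hN0 : algebraMap (Polynomial k) (RatFunc k) z.num ≠ 0 :=
            RatFunc.algebraMap_ne_zero hn0
          have hw : RatFunc.X * z⁻¹ ∈ infinitePlaceRing k := by
            refine ⟨reflect N (z.denom * Polynomial.X), reflect N z.num, ?_, ?_⟩
            · rw [coeff_reflect, revAt_zero]
              exact Polynomial.leadingCoeff_ne_zero.mpr hn0
            · have hdX : (z.denom * Polynomial.X).natDegree ≤ N := by
                rw [Polynomial.natDegree_mul_X z.denom_ne_zero]
                omega
              apply mul_right_cancel₀ (pow_ne_zero N RatFunc.X_ne_zero)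
              rw [mul_assoc, aeval_reflect_mul_pow N z.num le_rfl,
                aeval_reflect_mul_pow N (z.denom * Polynomial.X) hdX,
                map_mul, RatFunc.algebraMap_X]
              have hzd := mul_denom z
              rw [mul_comm (algebraMap (Polynomial k) (RatFunc k) z.denom) RatFunc.X,
                mul_assoc]
              congr 1
              rw [← hzd, inv_mul_cancel_left₀ hz0]
          have hwO : RatFunc.X * z⁻¹ ∈ O := hsub hw
          apply hX
          have hXeq : z * (RatFunc.X * z⁻¹) = RatFunc.X := by
            rw [mul_comm RatFunc.X z⁻¹, ← mul_assoc, mul_inv_cancel₀ hz0, one_mul]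
          rw [← hXeq]
          exact mul_mem hz hwO
        · intro hz
          exact hsub hz
    · rintro (⟨p, hpm, hpi, hset⟩ | hset)
      · constructor
        · intro a
          have : algebraMap k (RatFunc k) a ∈ finitePlaceRing k p := by
            refine ⟨Polynomial.C a, 1, hnotdvd p hpi, ?_⟩
            rw [map_one, mul_one, RatFunc.algebraMap_C, ← RatFunc.algebraMap_eq_C]
          rw [← SetLike.mem_coe, hset]
          exact this
        · intro htop
          have hmem : (algebraMap (Polynomial k) (RatFunc k) p)⁻¹ ∈ O := by
            rw [htop]; exact ValuationSubring.mem_top _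
          rw [← SetLike.mem_coe, hset] at hmem
          exact hinvnotmem p hpi hmem
      · constructor
        · intro a
          have : algebraMap k (RatFunc k) a ∈ infinitePlaceRing k := by
            refine ⟨Polynomial.C a, 1, by simp, ?_⟩
            rw [map_one, mul_one, aeval_C]
          rw [← SetLike.mem_coe, hset]
          exact this
        · intro htop
          apply hXnotinf
          rw [htop] at hset
          rw [← hset]
          exact ValuationSubring.mem_top _
  · intro p q hpm hpi hqm hqi hpq
    by_contra hne
    have hq0 : q ≠ 0 := hqi.ne_zero
    have hQ0 : algebraMap (Polynomial k) (RatFunc k) q ≠ 0 := RatFunc.algebraMap_ne_zero hq0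
    have h1 : (algebraMap (Polynomial k) (RatFunc k) q)⁻¹ ∈ finitePlaceRing k p := by
      refine ⟨1, q, ?_, by rw [inv_mul_cancel₀ hQ0, map_one]⟩
      intro hd
      exact hne (Polynomial.eq_of_monic_of_associated hpm hqm (hpi.associated_of_dvd hqi hd))
    rw [hpq] at h1
    exact hinvnotmem q hqi h1
  · intro p hpm hpi h
    have hXm : (RatFunc.X : RatFunc k) ∈ finitePlaceRing k p :=
      ⟨Polynomial.X, 1, hnotdvd p hpi, by rw [map_one, mul_one, RatFunc.algebraMap_X]⟩
    rw [h] at hXm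
    exact hXnotinf hXm
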